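/- Let A be a non-semisimple finite-dimensional k-algebra and M = A ⊕ D(A). If every indecomposable A-module is projective or injective, then gldim End_A(M) ≤ 3 and hence rep.dim A ≤ 3. -/

import Mathlib

open CategoryTheory

universe u

section Defs
variable (A : Type u) [Ring A]

/-- `N` lies in `add M`: it is a direct summand of a finite direct sum of copies of `M`. -/
def MemAdd (M N : ModuleCat.{u} A) : Prop :=
  ∃ (n : ℕ) (i : N ⟶ ModuleCat.of A (Fin n → M)) (p : ModuleCat.of A (Fin n → M) ⟶ N),
    i ≫ p = 𝟙 N

/-- `0 → M₁ →f M₀ →g X → 0` is a short exact sequence of `A`-modules. -/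
def IsSES {M₁ M₀ X : ModuleCat.{u} A} (f : M₁ ⟶ M₀) (g : M₀ ⟶ X) : Prop :=
  Function.Injective f ∧ Function.Surjective g ∧ LinearMap.range f.hom = LinearMap.ker g.hom

/-- `g : M₀ → X` is a right `add M`-approximation of `X`. -/
def IsRightApprox (M : ModuleCat.{u} A) {M₀ X : ModuleCat.{u} A} (g : M₀ ⟶ X) : Prop :=
  MemAdd A M M₀ ∧ ∀ (N : ModuleCat.{u} A) (f : N ⟶ X), MemAdd A M N → ∃ q : N ⟶ M₀, q ≫ g = f

/-- `g` is right minimal. -/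
def IsRightMinimal {M₀ X : ModuleCat.{u} A} (g : M₀ ⟶ X) : Prop :=
  ∀ h : M₀ ⟶ M₀, h ≫ g = g → IsIso h

/-- `0 → M₁ → M₀ → X → 0` is an `add M`-approximating sequence for `X`. -/
def IsApproxSeq (M : ModuleCat.{u} A) {M₁ M₀ X : ModuleCat.{u} A}
    (f : M₁ ⟶ M₀) (g : M₀ ⟶ X) : Prop :=
  MemAdd A M M₁ ∧ IsSES A f g ∧ IsRightApprox A M g

/-- minimal `add M`-approximating sequence. -/
def IsMinApproxSeq (M : ModuleCat.{u} A) {M₁ M₀ X : ModuleCat.{u} A}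
    (f : M₁ ⟶ M₀) (g : M₀ ⟶ X) : Prop :=
  IsApproxSeq A M f g ∧ IsRightMinimal A g

def HasApproxSeq (M X : ModuleCat.{u} A) : Prop :=
  ∃ (M₁ M₀ : ModuleCat.{u} A) (f : M₁ ⟶ M₀) (g : M₀ ⟶ X), IsApproxSeq A M f g

/-- projective dimension at most `n`. -/
def PdLE : ℕ → ModuleCat.{u} A → Prop
  | 0, X => Projective X
  | n+1, X => Projective X ∨ ∃ (K P : ModuleCat.{u} A) (f : K ⟶ P) (g : P ⟶ X),
      Projective P ∧ IsSES A f g ∧ PdLE n K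

/-- global dimension at most `n` (on finitely generated modules). -/
def GlobalDimLE (n : ℕ) : Prop := ∀ X : ModuleCat.{u} A, Module.Finite A X → PdLE A n X

/-- `M` is a generator-cogenerator of `mod A`. -/
def IsGenCogen (M : ModuleCat.{u} A) : Prop :=
  MemAdd A M (ModuleCat.of A A) ∧
    ∀ N : ModuleCat.{u} A, Module.Finite A N → Injective N → MemAdd A M N

/-- representation dimension at most `n`. -/
def RepDimLE (n : ℕ) : Prop :=
  ∃ M : ModuleCat.{u} A, Module.Finite A M ∧ IsGenCogen A M ∧
    GlobalDimLE (Module.End A M) n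

/-- representation dimension equal to `n`. -/
def RepDimEq (n : ℕ) : Prop := RepDimLE A n ∧ ∀ m : ℕ, m < n → ¬ RepDimLE A m

/-- indecomposable module -/
def Indec (X : ModuleCat.{u} A) : Prop :=
  (∃ x : X, x ≠ 0) ∧ ∀ e : X ⟶ X, e ≫ e = e → e = 0 ∨ e = 𝟙 X

/-- representation-finite -/
def RepFinite : Prop :=
  ∃ (n : ℕ) (f : Fin n → ModuleCat.{u} A),
    ∀ X : ModuleCat.{u} A, Module.Finite A X → Indec A X → ∃ i, Nonempty (X ≅ f i)
end Defs


section Dual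
variable (k : Type u) [Field k] (A : Type u) [Ring A] [Algebra k A]

/-- The `k`-dual `D(A) = Hom_k(A, k)` as a left `A`-module via `(a • φ) x = φ (x * a)`. -/
noncomputable instance dualModule : Module A (A →ₗ[k] k) where
  smul a φ := φ ∘ₗ LinearMap.mulRight k a
  one_smul φ := by ext x; change φ (x * 1) = φ x; rw [mul_one]
  mul_smul a b φ := by ext x; change φ (x * (a * b)) = φ ((x * a) * b); rw [mul_assoc]
  smul_zero a := rfl
  smul_add a φ ψ := rfl
  add_smul a b φ := by
    ext x; change φ (x * (a + b)) = φ (x * a) + φ (x * b); rw [mul_add, map_add]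
  zero_smul φ := by ext x; change φ (x * 0) = 0; rw [mul_zero, map_zero]

end Dual

section AddClosure
variable {A : Type u} [Ring A] {M : ModuleCat.{u} A}

lemma memAdd_of_retract {N N' : ModuleCat.{u} A} (i : N ⟶ N') (p : N' ⟶ N)
    (hip : i ≫ p = 𝟙 N) (hN' : MemAdd A M N') : MemAdd A M N := by
  obtain ⟨n, i', p', h'⟩ := hN'
  exact ⟨n, i ≫ i', p' ≫ p, by
    rw [Category.assoc, ← Category.assoc i', h']
    simpa using hip⟩

lemma memAdd_of_subsingleton {N : ModuleCat.{u} A} (hN : Subsingleton N) :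
    MemAdd A M N :=
  ⟨0, 0, 0, by ext x; exact Subsingleton.elim _ _⟩

lemma memAdd_of_iso {N N' : ModuleCat.{u} A} (e : N ≅ N') (hN' : MemAdd A M N') :
    MemAdd A M N :=
  memAdd_of_retract e.hom e.inv e.hom_inv_id hN'

lemma memAdd_pi (d : ℕ) {N : ModuleCat.{u} A} (hN : MemAdd A M N) :
    MemAdd A M (ModuleCat.of A (Fin d → N)) := by
  obtain ⟨n, i, p, h⟩ := hN
  obtain ⟨eqv⟩ : Nonempty (Fin d × Fin n ≃ Fin (d * n)) := ⟨finProdFinEquiv⟩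
  have hcomp : ∀ x : N, p (i x) = x := fun x =>
    congrFun (congrArg (fun (f : N ⟶ N) => (f : N → N)) h) x
  refine ⟨d * n, ?_, ?_, ?_⟩
  · exact ModuleCat.ofHom
      { toFun := fun v dn => i (v (eqv.symm dn).1) ((eqv.symm dn).2)
        map_add' := fun x y => funext fun dn => by
          change i (x _ + y _) _ = i (x _) _ + i (y _) _
          rw [map_add]; rfl
        map_smul' := fun a x => funext fun dn => by
          change i (a • x _) _ = a • i (x _) _
          rw [map_smul]; rfl }
  · exact ModuleCat.ofHom
      { toFun := fun w j => p (fun r => w (eqv (j, r)))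
        map_add' := fun x y => funext fun j => map_add p.hom _ _
        map_smul' := fun a x => funext fun j => map_smul p.hom a _ }
  · refine ModuleCat.hom_ext (LinearMap.ext fun v => ?_)
    funext j
    change p (fun r => i (v (eqv.symm (eqv (j, r))).1) ((eqv.symm (eqv (j, r))).2)) = v j
    simp only [Equiv.symm_apply_apply]
    exact hcomp (v j)

lemma memAdd_prod {N₁ N₂ : ModuleCat.{u} A} (h₁ : MemAdd A M N₁) (h₂ : MemAdd A M N₂) :
    MemAdd A M (ModuleCat.of A (↑N₁ × ↑N₂)) := by
  obtain ⟨n₁, i₁, p₁, hip₁⟩ := h₁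
  obtain ⟨n₂, i₂, p₂, hip₂⟩ := h₂
  obtain ⟨eqv⟩ : Nonempty (Fin n₁ ⊕ Fin n₂ ≃ Fin (n₁ + n₂)) := ⟨finSumFinEquiv⟩
  have hc₁ : ∀ x : N₁, p₁ (i₁ x) = x := fun x =>
    congrFun (congrArg (fun (f : N₁ ⟶ N₁) => (f : N₁ → N₁)) hip₁) x
  have hc₂ : ∀ x : N₂, p₂ (i₂ x) = x := fun x =>
    congrFun (congrArg (fun (f : N₂ ⟶ N₂) => (f : N₂ → N₂)) hip₂) x
  refine ⟨n₁ + n₂, ?_, ?_, ?_⟩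
  · exact ModuleCat.ofHom
      { toFun := fun x j => Sum.elim (i₁ x.1) (i₂ x.2) (eqv.symm j)
        map_add' := fun x y => funext fun j => by
          change Sum.elim (i₁ (x.1 + y.1)) (i₂ (x.2 + y.2)) (eqv.symm j) =
            Sum.elim (i₁ x.1) (i₂ x.2) (eqv.symm j) + Sum.elim (i₁ y.1) (i₂ y.2) (eqv.symm j)
          rw [map_add, map_add]
          cases eqv.symm j <;> rfl
        map_smul' := fun a x => funext fun j => by
          change Sum.elim (i₁ (a • x.1)) (i₂ (a • x.2)) (eqv.symm j) =
            a • Sum.elim (i₁ x.1) (i₂ x.2) (eqv.symm j)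
          rw [map_smul, map_smul]
          cases eqv.symm j <;> rfl }
  · exact ModuleCat.ofHom
      { toFun := fun w => (p₁ (fun r => w (eqv (Sum.inl r))),
        p₂ (fun r => w (eqv (Sum.inr r))))
        map_add' := fun x y => by
          refine Prod.ext ?_ ?_ <;> exact map_add _ _ _
        map_smul' := fun a x => by
          refine Prod.ext ?_ ?_ <;> exact map_smul _ a _ }
  · refine ModuleCat.hom_ext (LinearMap.ext fun x => ?_)
    change (p₁ (fun r => Sum.elim (i₁ x.1) (i₂ x.2) (eqv.symm (eqv (Sum.inl r)))),
        p₂ (fun r => Sum.elim (i₁ x.1) (i₂ x.2) (eqv.symm (eqv (Sum.inr r))))) = x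
    simp only [Equiv.symm_apply_apply, Sum.elim_inl, Sum.elim_inr]
    exact Prod.ext (hc₁ x.1) (hc₂ x.2)
end AddClosure
section KStruct
variable (k A : Type u) [Field k] [Ring A] [Algebra k A]

/-- The `k`-module structure on an `A`-module obtained by restriction along `algebraMap`. -/
def kMod (X : Type u) [AddCommGroup X] [Module A X] : Module k X :=
  Module.compHom X (algebraMap k A)

variable (X : Type u) [AddCommGroup X] [Module A X]

lemma kMod_smul_def (c : k) (x : X) : (letI := kMod k A X; c • x) = algebraMap k A c • x := rfl

def kModTower : letI := kMod k A X; IsScalarTower k A X := by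
  letI := kMod k A X
  refine ⟨fun c a x => ?_⟩
  show (c • a) • x = algebraMap k A c • (a • x)
  rw [Algebra.smul_def, mul_smul]

def kModComm : letI := kMod k A X; SMulCommClass A k X := by
  letI := kMod k A X
  refine ⟨fun a c x => ?_⟩
  show a • algebraMap k A c • x = algebraMap k A c • (a • x)
  rw [← mul_smul, ← Algebra.commutes, mul_smul]

def kModFinite [FiniteDimensional k A] [Module.Finite A X] :
    letI := kMod k A X; Module.Finite k X := by
  letI := kMod k A X
  letI := kModTower k A X
  exact Module.Finite.trans A X
end KStruct

section KDim
variable (k : Type u) {A : Type u} [Field k] [Ring A] [Algebra k A]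

/-- dimension of an `A`-module over `k`. -/
noncomputable def kdim (X : ModuleCat.{u} A) : ℕ :=
  letI := kMod k A X; Module.finrank k X

lemma subsingleton_of_kdim_zero [FiniteDimensional k A] (X : ModuleCat.{u} A)
    [Module.Finite A X] (hX : kdim k X = 0) : Subsingleton X := by
  letI := kMod k A X
  haveI := kModFinite k A X
  exact (Module.finrank_zero_iff (R := k)).mp hX

/-- the identity equivalence between an `A`-submodule with restricted `k`-structure and
the corresponding `k`-submodule. -/
def submoduleEquiv {X : ModuleCat.{u} A} (p : Submodule A X) :
    letI := kMod k A X
    letI := kMod k A p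
    letI := kModTower k A X
    ↥p ≃ₗ[k] ↥(p.restrictScalars k) := by
  letI := kMod k A X
  letI := kMod k A p
  letI := kModTower k A X
  exact
  { toFun := fun x => ⟨x.1, x.2⟩
    invFun := fun x => ⟨x.1, x.2⟩
    map_add' := fun x y => rfl
    map_smul' := fun c x => Subtype.ext rfl
    left_inv := fun x => rfl
    right_inv := fun x => rfl }

lemma finite_submodule [FiniteDimensional k A] {X : ModuleCat.{u} A} [Module.Finite A X]
    (p : Submodule A X) : Module.Finite A p := by
  letI := kMod k A X
  letI := kMod k A p
  letI := kModTower k A X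
  letI := kModTower k A p
  haveI := kModFinite k A X
  haveI : Module.Finite k ↥(p.restrictScalars k) := by
    haveI : IsNoetherian k X := IsNoetherian.iff_fg.2 inferInstance
    infer_instance
  haveI : Module.Finite k ↥p :=
    Module.Finite.equiv (submoduleEquiv k p).symm
  exact Module.Finite.of_restrictScalars_finite k A p

lemma kdim_lt [FiniteDimensional k A] {X : ModuleCat.{u} A} [Module.Finite A X]
    {p : Submodule A X} (hp : p ≠ ⊤) : kdim k (ModuleCat.of A p) < kdim k X := by
  letI := kMod k A X
  letI := kMod k A p
  letI := kModTower k A X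
  haveI := kModFinite k A X
  have h1 : kdim k (ModuleCat.of A p) = Module.finrank k ↥(p.restrictScalars k) :=
    (submoduleEquiv k p).finrank_eq
  rw [h1]
  have h2 : kdim k X = Module.finrank k X := rfl
  rw [h2]
  refine Submodule.finrank_lt (K := k) (V := X) ?_
  refine fun hc => hp ?_
  rw [Submodule.eq_top_iff']
  intro x
  have : x ∈ p.restrictScalars k := by rw [hc]; trivial
  exact this
end KDim
section ProjInj
variable {k A : Type u} [Field k] [Ring A] [Algebra k A]

lemma memAdd_of_projective {M X : ModuleCat.{u} A} [Module.Finite A X]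
    (hproj : Projective X) (hA : MemAdd A M (ModuleCat.of A A)) : MemAdd A M X := by
  obtain ⟨n, q, hq⟩ := Module.Finite.exists_fin' A X
  let qh : ModuleCat.of A (Fin n → A) ⟶ X := ModuleCat.ofHom q
  haveI : Epi qh := (ModuleCat.epi_iff_surjective qh).mpr hq
  haveI := hproj
  refine memAdd_of_retract (Projective.factorThru (𝟙 X) qh) qh
    (Projective.factorThru_comp _ _) ?_
  exact memAdd_pi n hA

lemma memAdd_of_injective [FiniteDimensional k A] {M X : ModuleCat.{u} A} [Module.Finite A X]
    (hinj : Injective X) (hD : MemAdd A M (ModuleCat.of A (A →ₗ[k] k))) : MemAdd A M X := by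
  letI := kMod k A X
  haveI := kModTower k A X
  haveI := kModFinite k A X
  set d := Module.finrank k X with hd
  let β : Module.Basis (Fin d) k X := Module.finBasis k X
  let ι : X →ₗ[A] (Fin d → (A →ₗ[k] k)) :=
    { toFun := fun x i => (β.coord i) ∘ₗ
        ({ toFun := fun a => a • x
           map_add' := fun a b => add_smul a b x
           map_smul' := fun c a => by
             simp only [RingHom.id_apply]
             show (c • a) • x = algebraMap k A c • (a • x)
             rw [Algebra.smul_def, mul_smul] } : A →ₗ[k] X)
      map_add' := fun x y => funext fun i => LinearMap.ext fun a => by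
        change β.coord i (a • (x + y)) = β.coord i (a • x) + β.coord i (a • y)
        rw [smul_add, map_add]
      map_smul' := fun b x => funext fun i => LinearMap.ext fun a => by
        change β.coord i (a • b • x) = β.coord i ((a * b) • x)
        rw [mul_smul] }
  have hι : Function.Injective ι := by
    intro x y hxy
    have : ∀ i, β.coord i x = β.coord i (x - y) + β.coord i y := by
      intro i
      rw [← map_add, sub_add_cancel]
    have hz : ∀ i, β.coord i (x - y) = 0 := by
      intro i
      have h1 := congrFun (congrFun (congrArg (fun (f : X →ₗ[A] (Fin d → (A →ₗ[k] k))) =>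
        (f : X → (Fin d → (A →ₗ[k] k)))) (rfl : ι = ι)) x) i
      have h2 : (ι x i : A →ₗ[k] k) 1 = (ι y i : A →ₗ[k] k) 1 := by rw [hxy]
      have h3 : β.coord i ((1 : A) • x) = β.coord i ((1 : A) • y) := h2
      rw [one_smul, one_smul] at h3
      rw [map_sub, h3, sub_self]
    have := β.forall_coord_eq_zero_iff.mp hz
    exact sub_eq_zero.mp this
  let ih : X ⟶ ModuleCat.of A (Fin d → (A →ₗ[k] k)) := ModuleCat.ofHom ι
  haveI : Mono ih := (ModuleCat.mono_iff_injective ih).mpr hι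
  haveI := hinj
  refine memAdd_of_retract ih (Injective.factorThru (𝟙 X) ih)
    (Injective.comp_factorThru _ _) ?_
  exact memAdd_pi d hD

lemma memAdd_all [FiniteDimensional k A] {M : ModuleCat.{u} A}
    (hA : MemAdd A M (ModuleCat.of A A)) (hD : MemAdd A M (ModuleCat.of A (A →ₗ[k] k)))
    (h : ∀ X : ModuleCat.{u} A, Module.Finite A X → Indec A X →
      (Projective X ∨ Injective X)) :
    ∀ X : ModuleCat.{u} A, Module.Finite A X → MemAdd A M X := by
  suffices H : ∀ (d : ℕ) (X : ModuleCat.{u} A), Module.Finite A X → kdim k X ≤ d →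
      MemAdd A M X by
    intro X hX
    exact H (kdim k X) X hX le_rfl
  intro d
  induction d with
  | zero =>
    intro X hX hdim
    exact memAdd_of_subsingleton (subsingleton_of_kdim_zero k X (Nat.le_zero.mp hdim))
  | succ d IH =>
    intro X hX hdim
    by_cases hno : Subsingleton X
    · exact memAdd_of_subsingleton hno
    have hne : ∃ x : X, x ≠ 0 := by
      rcases not_subsingleton_iff_nontrivial.mp hno with ⟨x, y, hxy⟩
      rcases eq_or_ne x 0 with rfl | hx0
      · exact ⟨y, fun hy => hxy (by rw [hy])⟩
      · exact ⟨x, hx0⟩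
    by_cases hic : ∀ e : X ⟶ X, e ≫ e = e → e = 0 ∨ e = 𝟙 X
    · rcases h X hX ⟨hne, hic⟩ with hp | hi
      · exact memAdd_of_projective hp hA
      · exact memAdd_of_injective hi hD
    · push_neg at hic
      obtain ⟨e, he, he0, he1⟩ := hic
      have heid : ∀ x : X, e (e x) = e x := fun x =>
        congrFun (congrArg (fun (f : X ⟶ X) => (f : X → X)) he) x
      set eL : X →ₗ[A] X := e.hom
      have hproj : LinearMap.IsProj (LinearMap.range eL) eL := by
        refine ⟨fun x => LinearMap.mem_range_self _ x, ?_⟩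
        rintro x ⟨y, rfl⟩
        exact heid y
      have hcompl : IsCompl (LinearMap.range eL) (LinearMap.ker eL) := hproj.isCompl
      have hrne : LinearMap.range eL ≠ ⊤ := by
        intro hc
        apply he1
        refine ModuleCat.hom_ext (LinearMap.ext fun x => ?_)
        obtain ⟨y, rfl⟩ : ∃ y, eL y = x := by
          have : x ∈ LinearMap.range eL := by rw [hc]; trivial
          exact this
        exact heid y
      have hkne : LinearMap.ker eL ≠ ⊤ := by
        intro hc
        apply he0
        refine ModuleCat.hom_ext (LinearMap.ext fun x => ?_)
        have : x ∈ LinearMap.ker eL := by rw [hc]; trivial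
        exact this
      haveI : Module.Finite A ↥(LinearMap.range eL) := finite_submodule k _
      haveI : Module.Finite A ↥(LinearMap.ker eL) := finite_submodule k _
      have h1 : MemAdd A M (ModuleCat.of A ↥(LinearMap.range eL)) := by
        refine IH _ ‹_› ?_
        exact Nat.lt_succ_iff.mp (lt_of_lt_of_le (kdim_lt k hrne) hdim)
      have h2 : MemAdd A M (ModuleCat.of A ↥(LinearMap.ker eL)) := by
        refine IH _ ‹_› ?_
        exact Nat.lt_succ_iff.mp (lt_of_lt_of_le (kdim_lt k hkne) hdim)
      have hprod := memAdd_prod h1 h2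
      refine memAdd_of_iso ?_ hprod
      refine LinearEquiv.toModuleIso ?_
      exact (Submodule.prodEquivOfIsCompl _ _ hcompl).symm
end ProjInj
section EndSide
variable {A : Type u} [Ring A] (W : Type u) [AddCommGroup W] [Module A W]

/-- `Hom_A(W^r, W) ≅ End(W)^r` as left `End(W)`-modules. -/
noncomputable def homPiEquiv (r : ℕ) :
    ((Fin r → W) →ₗ[A] W) ≃ₗ[Module.End A W] (Fin r → Module.End A W) where
  toFun h := fun i => h ∘ₗ LinearMap.single A (fun _ => W) i
  invFun v := ∑ i, (v i : W →ₗ[A] W) ∘ₗ LinearMap.proj i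
  map_add' h h' := funext fun i => LinearMap.add_comp _ _ _
  map_smul' e h := funext fun i => LinearMap.ext fun x => rfl
  left_inv h := by
    refine LinearMap.ext fun w => ?_
    have : ∀ i, ((h ∘ₗ LinearMap.single A (fun _ => W) i) ∘ₗ LinearMap.proj i) w
        = h (Pi.single i (w i)) := fun i => rfl
    rw [LinearMap.sum_apply]
    calc ∑ i, ((h ∘ₗ LinearMap.single A (fun _ => W) i) ∘ₗ LinearMap.proj i) w
        = ∑ i, h (Pi.single i (w i)) := by simp only [this]
      _ = h (∑ i, Pi.single i (w i)) := (map_sum h _ _).symm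
      _ = h w := by rw [Finset.univ_sum_single]
  right_inv v := by
    refine funext fun i => LinearMap.ext fun x => ?_
    calc ((∑ j, (v j : W →ₗ[A] W) ∘ₗ LinearMap.proj j) ∘ₗ
          LinearMap.single A (fun _ => W) i) x
        = ∑ j, v j (Pi.single (M := fun _ => W) i x j) := by
          rw [LinearMap.comp_apply, LinearMap.sum_apply]
          exact Finset.sum_congr rfl fun j _ => rfl
      _ = v i x := by
          rw [Fintype.sum_eq_single i (fun j hj => by
            rw [Pi.single_eq_of_ne hj, map_zero]), Pi.single_eq_same]

lemma projective_of_retract_mc {R : Type u} [Ring R] {X Y : ModuleCat.{u} R}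
    (i : X ⟶ Y) (p : Y ⟶ X) (hip : i ≫ p = 𝟙 X) (hY : Projective Y) : Projective X := by
  constructor
  intro Z Z' f e he
  obtain ⟨g, hg⟩ := hY.factors (p ≫ f) e
  exact ⟨i ≫ g, by rw [Category.assoc, hg, ← Category.assoc, hip, Category.id_comp]⟩

lemma projective_hom (C : Type u) [AddCommGroup C] [Module A C]
    (hC : MemAdd A (ModuleCat.of A W) (ModuleCat.of A C)) :
    Projective (ModuleCat.of (Module.End A W) (C →ₗ[A] W)) := by
  obtain ⟨r, i, p, hip⟩ := hC
  have hpi : ∀ x : C, p (i x) = x := fun x =>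
    congrFun (congrArg (fun (f : ModuleCat.of A C ⟶ ModuleCat.of A C) =>
      (f : C → C)) hip) x
  have hfree : Projective (ModuleCat.of (Module.End A W) ((Fin r → W) →ₗ[A] W)) :=
    ModuleCat.projective_of_free ((Pi.basisFun (Module.End A W) (Fin r)).map
      (homPiEquiv W r).symm)
  refine projective_of_retract_mc
    (X := ModuleCat.of (Module.End A W) (C →ₗ[A] W))
    (Y := ModuleCat.of (Module.End A W) ((Fin r → W) →ₗ[A] W))
    (ModuleCat.ofHom
    { toFun := fun q => q ∘ₗ (p.hom : (Fin r → W) →ₗ[A] C)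
      map_add' := fun q q' => LinearMap.add_comp _ _ _
      map_smul' := fun e q => rfl })
    (ModuleCat.ofHom
    { toFun := fun h => h ∘ₗ (i.hom : C →ₗ[A] (Fin r → W))
      map_add' := fun h h' => LinearMap.add_comp _ _ _
      map_smul' := fun e h => rfl })
    ?_ hfree
  refine ModuleCat.hom_ext (LinearMap.ext fun q => LinearMap.ext fun x => ?_)
  let q' : C →ₗ[A] W := q
  show q' (p (i x)) = q' x
  exact congrArg q' (hpi x)
end EndSide
section MainPd
variable {A : Type u} [Ring A] (W : Type u) [AddCommGroup W] [Module A W]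

lemma globalDimLE_three [Module.Finite A W]
    (hNoeth : IsNoetherianRing (Module.End A W))
    (hadd : ∀ C : ModuleCat.{u} A, Module.Finite A C → MemAdd A (ModuleCat.of A W) C) :
    GlobalDimLE (Module.End A W) 3 := by
  set E := Module.End A W with hE
  intro X hX
  obtain ⟨n, p0, hp0⟩ := Module.Finite.exists_fin' E X
  haveI : IsNoetherian E (Fin n → E) := inferInstance
  haveI : Module.Finite E ↥(LinearMap.ker p0) :=
    Module.Finite.iff_fg.mpr (IsNoetherian.noetherian _)
  obtain ⟨m, q1, hq1⟩ := Module.Finite.exists_fin' E ↥(LinearMap.ker p0)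
  let f : (Fin m → E) →ₗ[E] (Fin n → E) := (LinearMap.ker p0).subtype ∘ₗ q1
  let T : Fin m → Fin n → E := fun i j => f (Pi.single i 1) j
  have hfT : ∀ (x : Fin m → E) (j : Fin n), f x j = ∑ i, x i * T i j := by
    intro x j
    have hx : x = ∑ i, x i • Pi.single (M := fun _ => E) i 1 := by
      conv_lhs => rw [← Finset.univ_sum_single x]
      refine Finset.sum_congr rfl fun i _ => ?_
      ext j'
      simp [Pi.single_apply, mul_ite]
    conv_lhs => rw [hx]
    rw [map_sum, Finset.sum_apply]
    refine Finset.sum_congr rfl fun i _ => ?_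
    rw [map_smul]
    rfl
  let g : (Fin n → W) →ₗ[A] (Fin m → W) :=
    LinearMap.pi (fun i => ∑ j, (T i j : W →ₗ[A] W) ∘ₗ LinearMap.proj j)
  have hg : ∀ (v : Fin n → W) (i : Fin m), g v i = ∑ j, T i j (v j) := by
    intro v i
    show ((∑ j, (T i j : W →ₗ[A] W) ∘ₗ LinearMap.proj j)) v = _
    rw [LinearMap.sum_apply]
    exact Finset.sum_congr rfl fun j _ => rfl
  haveI : Module.Finite A (Fin m → W) := inferInstance
  haveI hQfin : Module.Finite A ((Fin m → W) ⧸ LinearMap.range g) :=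
    Module.Finite.quotient A _
  have hQmem := hadd (ModuleCat.of A ((Fin m → W) ⧸ LinearMap.range g)) hQfin
  have hP2 : Projective (ModuleCat.of E (((Fin m → W) ⧸ LinearMap.range g) →ₗ[A] W)) :=
    projective_hom W _ hQmem
  let compπ : (((Fin m → W) ⧸ LinearMap.range g) →ₗ[A] W) →ₗ[E]
      ((Fin m → W) →ₗ[A] W) :=
    { toFun := fun q => q ∘ₗ (LinearMap.range g).mkQ
      map_add' := fun _ _ => LinearMap.add_comp _ _ _
      map_smul' := fun _ _ => rfl }
  let Ψ : (((Fin m → W) ⧸ LinearMap.range g) →ₗ[A] W) →ₗ[E] (Fin m → E) :=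
    (homPiEquiv W m).toLinearMap ∘ₗ compπ
  have hΨapp : ∀ q, Ψ q = (homPiEquiv W m) (q ∘ₗ (LinearMap.range g).mkQ) := fun q => rfl
  have hΨinj : Function.Injective Ψ := by
    intro q q' hqq'
    have h1 : q ∘ₗ (LinearMap.range g).mkQ = q' ∘ₗ (LinearMap.range g).mkQ :=
      (homPiEquiv W m).injective hqq'
    refine LinearMap.ext fun y => ?_
    obtain ⟨w, rfl⟩ := (LinearMap.range g).mkQ_surjective y
    exact congrFun (congrArg (fun (h : (Fin m → W) →ₗ[A] W) =>
      (h : (Fin m → W) → W)) h1) w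
  have hsingle : ∀ (j : Fin n) (w : W) (i : Fin m),
      g (Pi.single j w) i = T i j w := by
    intro j w i
    rw [hg]
    rw [Fintype.sum_eq_single j (fun j' hj' => by
      rw [Pi.single_eq_of_ne hj', map_zero]), Pi.single_eq_same]
  have hrange : LinearMap.range Ψ = LinearMap.ker f := by
    apply le_antisymm
    · rintro _ ⟨q, rfl⟩
      refine LinearMap.mem_ker.mpr (funext fun j => ?_)
      rw [hfT]
      refine LinearMap.ext fun w => ?_
      rw [LinearMap.sum_apply]
      have hterm : ∀ i, (Ψ q i * T i j) w =
          q (Submodule.Quotient.mk (Pi.single i (T i j w))) := fun i => rfl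
      calc ∑ i, (Ψ q i * T i j) w
          = ∑ i, q (Submodule.Quotient.mk (Pi.single i (T i j w))) :=
            Finset.sum_congr rfl fun i _ => hterm i
        _ = q (Submodule.Quotient.mk (∑ i, Pi.single i (T i j w))) := by
            simp_rw [← Submodule.mkQ_apply]
            rw [← map_sum, ← map_sum]
        _ = q (Submodule.Quotient.mk (g (Pi.single j w))) := by
            congr 1
            rw [Finset.univ_sum_single (fun i => T i j w)]
            exact congrArg _ (funext fun i => (hsingle j w i).symm)
        _ = 0 := by
            rw [(Submodule.Quotient.mk_eq_zero _).mpr (LinearMap.mem_range_self g _),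
              map_zero]
    · rintro x hx
      have hfx : f x = 0 := LinearMap.mem_ker.mp hx
      set h0 : (Fin m → W) →ₗ[A] W := (homPiEquiv W m).symm x with hh0
      have hkill : ∀ v : Fin n → W, h0 (g v) = 0 := by
        intro v
        have e1 : h0 (g v) = ∑ i, x i (g v i) := by
          show (∑ i, (x i : W →ₗ[A] W) ∘ₗ LinearMap.proj i) (g v) = _
          rw [LinearMap.sum_apply]
          exact Finset.sum_congr rfl fun i _ => rfl
        rw [e1]
        calc ∑ i, x i (g v i) = ∑ i, ∑ j, x i (T i j (v j)) := by
              refine Finset.sum_congr rfl fun i _ => ?_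
              rw [hg, map_sum]
          _ = ∑ j, ∑ i, x i (T i j (v j)) := Finset.sum_comm
          _ = ∑ j, (f x j) (v j) := by
              refine Finset.sum_congr rfl fun j _ => ?_
              rw [hfT, LinearMap.sum_apply]
              exact Finset.sum_congr rfl fun i _ => rfl
          _ = 0 := Finset.sum_eq_zero fun j _ => by rw [hfx]; rfl
      have hle : LinearMap.range g ≤ LinearMap.ker h0 := by
        rintro _ ⟨v, rfl⟩
        exact hkill v
      refine ⟨(LinearMap.range g).liftQ h0 hle, ?_⟩
      rw [hΨapp, Submodule.liftQ_mkQ]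
      exact (homPiEquiv W m).apply_symm_apply x
  have hkerq : LinearMap.ker q1 = LinearMap.ker f := by
    ext x
    show q1 x = 0 ↔ f x = 0
    constructor
    · intro h
      show (LinearMap.ker p0).subtype (q1 x) = 0
      rw [h, map_zero]
    · intro h
      have : ((q1 x : Fin n → E)) = 0 := h
      exact Subtype.ext this
  have hkerproj : Projective (ModuleCat.of E ↥(LinearMap.ker f)) := by
    refine Projective.of_iso ?_ hP2
    exact LinearEquiv.toModuleIso
      ((LinearEquiv.ofInjective Ψ hΨinj).trans (LinearEquiv.ofEq _ _ hrange))
  refine Or.inr ⟨ModuleCat.of E ↥(LinearMap.ker p0), ModuleCat.of E (Fin n → E),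
    ModuleCat.ofHom (LinearMap.ker p0).subtype, ModuleCat.ofHom p0,
    ModuleCat.projective_of_free (Pi.basisFun E (Fin n)),
    ⟨Submodule.injective_subtype _, hp0, Submodule.range_subtype _⟩, ?_⟩
  refine Or.inr ⟨ModuleCat.of E ↥(LinearMap.ker q1), ModuleCat.of E (Fin m → E),
    ModuleCat.ofHom (LinearMap.ker q1).subtype, ModuleCat.ofHom q1,
    ModuleCat.projective_of_free (Pi.basisFun E (Fin m)),
    ⟨Submodule.injective_subtype _, hq1, Submodule.range_subtype _⟩, ?_⟩
  refine Or.inl ?_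
  show Projective (ModuleCat.of E ↥(LinearMap.ker q1))
  rw [hkerq]
  exact hkerproj
end MainPd
section Final
variable {k : Type u} [Field k] {A : Type u} [Ring A] [Algebra k A] [FiniteDimensional k A]

lemma dual_tower : IsScalarTower k A (A →ₗ[k] k) := by
  refine ⟨fun c a φ => LinearMap.ext fun x => ?_⟩
  show φ (x * (c • a)) = c • ((a • φ) x)
  rw [mul_smul_comm, map_smul]
  rfl

lemma finite_W : Module.Finite A (A × (A →ₗ[k] k)) := by
  haveI := dual_tower (k := k) (A := A)
  haveI : Module.Finite A (A →ₗ[k] k) :=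
    Module.Finite.of_restrictScalars_finite k A _
  infer_instance

set_option synthInstance.maxHeartbeats 1000000 in
include k in
lemma noeth_end_generic (W : Type u) [AddCommGroup W] [Module A W] [Module.Finite A W] :
    IsNoetherianRing (Module.End A W) := by
  letI : Module k W := kMod k A W
  haveI := kModTower k A W
  haveI := kModComm k A W
  haveI := kModFinite k A W
  haveI : SMulCommClass k k W := ⟨fun c c' x => by
    show algebraMap k A c • algebraMap k A c' • x = algebraMap k A c' • algebraMap k A c • x
    rw [← mul_smul, ← mul_smul, ← map_mul, ← map_mul, mul_comm]⟩
  letI : Algebra k (Module.End A W) := Module.End.instAlgebra k A W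
  haveI : FiniteDimensional k (Module.End A W) := by
    refine FiniteDimensional.of_injective
      (V₂ := W →ₗ[k] W)
      { toFun := fun f => f.restrictScalars k
        map_add' := fun f g => rfl
        map_smul' := fun c f => rfl } ?_
    intro f g hfg
    exact LinearMap.ext fun x =>
      congrFun (congrArg (fun (h : W →ₗ[k] W) => (h : W → W)) hfg) x
  haveI : IsNoetherian k (Module.End A W) := IsNoetherian.iff_fg.2 inferInstance
  exact isNoetherianRing_iff.mpr (isNoetherian_of_tower k inferInstance)

lemma noeth_endW : IsNoetherianRing (Module.End A (A × (A →ₗ[k] k))) := by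
  haveI := finite_W (k := k) (A := A)
  exact noeth_end_generic (k := k) _

lemma memAdd_A : MemAdd A (ModuleCat.of A (A × (A →ₗ[k] k))) (ModuleCat.of A A) := by
  refine ⟨1, ?_, ?_, ?_⟩
  · refine ModuleCat.ofHom ?_; exact
    { toFun := fun a _ => (a, 0)
      map_add' := fun a b => funext fun _ => Prod.ext rfl (add_zero 0).symm
      map_smul' := fun a b => funext fun _ => Prod.ext rfl (smul_zero a).symm }
  · refine ModuleCat.ofHom ?_; exact
    { toFun := fun v => (v 0).1
      map_add' := fun v w => rfl
      map_smul' := fun a v => rfl }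
  · rfl

lemma memAdd_D : MemAdd A (ModuleCat.of A (A × (A →ₗ[k] k)))
    (ModuleCat.of A (A →ₗ[k] k)) := by
  refine ⟨1, ?_, ?_, ?_⟩
  · refine ModuleCat.ofHom ?_; exact
    { toFun := fun φ _ => (0, φ)
      map_add' := fun φ ψ => funext fun _ => Prod.ext (add_zero 0).symm rfl
      map_smul' := fun a φ => funext fun _ => Prod.ext (smul_zero a).symm rfl }
  · refine ModuleCat.ofHom ?_; exact
    { toFun := fun v => (v 0).2
      map_add' := fun v w => rfl
      map_smul' := fun a v => rfl }
  · rfl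
end Final
/-- If `A` is non-semisimple and every indecomposable `A`-module is
projective or injective, then `gldim End_A(A ⊕ D(A)) ≤ 3` and `rep.dim A ≤ 3`. -/
theorem stmt11 {k : Type u} [Field k] (A : Type u) [Ring A] [Algebra k A]
    [FiniteDimensional k A] (hss : ¬ IsSemisimpleRing A)
    (h : ∀ X : ModuleCat.{u} A, Module.Finite A X → Indec A X →
      (Projective X ∨ Injective X)) :
    GlobalDimLE (Module.End A (ModuleCat.of A (A × (A →ₗ[k] k)))) 3 ∧
    RepDimLE A 3 := by
  haveI := finite_W (k := k) (A := A)
  have hall := memAdd_all (k := k) (memAdd_A (k := k) (A := A)) (memAdd_D (k := k) (A := A)) h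
  have pd : GlobalDimLE (Module.End A (A × (A →ₗ[k] k))) 3 :=
    globalDimLE_three (A × (A →ₗ[k] k)) (noeth_endW (k := k) (A := A))
      (fun C hC => hall C hC)
  refine ⟨pd, ModuleCat.of A (A × (A →ₗ[k] k)), finite_W (k := k) (A := A),
    ⟨memAdd_A (k := k) (A := A), fun N hN hNinj => ?_⟩, pd⟩
  haveI := hN
  exact memAdd_of_injective (k := k) hNinj (memAdd_D (k := k) (A := A))
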